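/- Let a, b be real numbers with a > -1 and b > -1, let k, s be positive integers, and let z be a real number with |z| > sup_{x ∈ [0,1]} x^k (1-x)^s (equivalently |z| > k^k s^s / (k+s)^{k+s}). Then (z · Γ(a+b+2) / (Γ(a+1) Γ(b+1))) · ∫_0^1 x^a (1-x)^b / (z - x^k (1-x)^s) dx = Σ_{n=0}^∞ (a+1)_{kn} (b+1)_{sn} / ((a+b+2)_{(k+s)n} · z^n), where both the integral and the series converge. -/

import Mathlib

open Real MeasureTheory

noncomputable def risingFactorial (a : ℝ) (n : ℕ) : ℝ := ∏ i ∈ Finset.range n, (a + i)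

lemma beta_eq_on (p q : ℝ) : ∀ x ∈ Set.Ioc (0:ℝ) 1,
    ((x : ℂ) ^ ((p:ℂ)-1) * ((1:ℂ)-(x:ℂ)) ^ ((q:ℂ)-1)) = ((x ^ (p-1) * (1-x) ^ (q-1) : ℝ) : ℂ) := by
  intro x hx
  have h1 : ((x ^ (p-1) : ℝ) : ℂ) = (x:ℂ) ^ ((p:ℂ)-1) := by
    rw [Complex.ofReal_cpow hx.1.le]; push_cast; ring_nf
  have h2 : (((1-x) ^ (q-1) : ℝ) : ℂ) = ((1:ℂ)-(x:ℂ)) ^ ((q:ℂ)-1) := by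
    rw [Complex.ofReal_cpow (by linarith [hx.2])]; push_cast; ring_nf
  rw [Complex.ofReal_mul, h1, h2]

lemma beta_intble (p q : ℝ) (hp : 0 < p) (hq : 0 < q) :
    IntervalIntegrable (fun x : ℝ => x ^ (p-1) * (1-x) ^ (q-1)) volume 0 1 := by
  have hc : IntervalIntegrable (fun x : ℝ => (x : ℂ) ^ ((p:ℂ)-1) * ((1:ℂ)-x) ^ ((q:ℂ)-1))
      volume 0 1 := by
    have := Complex.betaIntegral_convergent (u := (p:ℂ)) (v := (q:ℂ)) (by simpa) (by simpa)
    simpa using this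
  rw [intervalIntegrable_iff_integrableOn_Ioc_of_le (by norm_num)] at hc ⊢
  have hc2 : IntegrableOn (fun x : ℝ => ((x ^ (p-1) * (1-x) ^ (q-1) : ℝ) : ℂ))
      (Set.Ioc 0 1) volume :=
    hc.congr ((ae_restrict_iff' measurableSet_Ioc).2
      (Filter.Eventually.of_forall (beta_eq_on p q)))
  simpa [Complex.ofReal_re, IntegrableOn] using hc2.re

lemma beta_val (p q : ℝ) (hp : 0 < p) (hq : 0 < q) :
    ∫ x in (0:ℝ)..1, x ^ (p-1) * (1-x) ^ (q-1)
      = Real.Gamma p * Real.Gamma q / Real.Gamma (p+q) := by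
  have hG := Complex.Gamma_mul_Gamma_eq_betaIntegral (s := (p:ℂ)) (t := (q:ℂ))
    (by simpa) (by simpa)
  have hbeta : Complex.betaIntegral p q
      = ((∫ x in (0:ℝ)..1, x ^ (p-1) * (1-x) ^ (q-1) : ℝ) : ℂ) := by
    rw [Complex.betaIntegral, ← intervalIntegral.integral_ofReal]
    refine intervalIntegral.integral_congr_ae ?_
    rw [Set.uIoc_of_le (by norm_num : (0:ℝ) ≤ 1)]
    exact Filter.Eventually.of_forall (beta_eq_on p q)
  rw [hbeta] at hG
  have hGne : Real.Gamma (p + q) ≠ 0 := (Real.Gamma_pos_of_pos (by linarith)).ne'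
  rw [show ((p:ℂ) + q) = ((p + q : ℝ) : ℂ) by push_cast; ring] at hG
  rw [Complex.Gamma_ofReal, Complex.Gamma_ofReal, Complex.Gamma_ofReal,
      ← Complex.ofReal_mul, ← Complex.ofReal_mul] at hG
  have h2 := Complex.ofReal_injective hG
  field_simp
  linarith [h2]

lemma gamma_rf (c : ℝ) (hc : 0 < c) (m : ℕ) :
    Real.Gamma (c + m) = risingFactorial c m * Real.Gamma c := by
  induction m with
  | zero => simp [risingFactorial]
  | succ n ih =>
    have h1 : c + (n+1 : ℕ) = (c + n) + 1 := by push_cast; ring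
    rw [h1, Real.Gamma_add_one (by positivity), ih, risingFactorial, risingFactorial,
      Finset.prod_range_succ]
    ring

lemma rf_pos (c : ℝ) (hc : 0 < c) (m : ℕ) : 0 < risingFactorial c m :=
  Finset.prod_pos fun i _ => by positivity

lemma amgm_bound (k s : ℕ) (hk : 0 < k) (hs : 0 < s) {x : ℝ} (hx0 : 0 ≤ x) (hx1 : x ≤ 1) :
    x ^ k * (1-x) ^ s ≤ (k : ℝ) ^ k * (s : ℝ) ^ s / ((k : ℝ) + s) ^ (k + s) := by
  have hkp : (0:ℝ) < k := by exact_mod_cast hk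
  have hsp : (0:ℝ) < s := by exact_mod_cast hs
  have hks : (0:ℝ) < (k:ℝ) + s := by linarith
  set w₁ : ℝ := k / (k + s) with hw₁
  set w₂ : ℝ := s / (k + s) with hw₂
  have hw1p : 0 < w₁ := by positivity
  have hw2p : 0 < w₂ := by positivity
  have hwsum : w₁ + w₂ = 1 := by rw [hw₁, hw₂, ← add_div, div_self hks.ne']
  have hp1 : (0:ℝ) ≤ x / w₁ := by positivity
  have hp2 : (0:ℝ) ≤ (1-x) / w₂ := div_nonneg (by linarith) hw2p.le
  have key := Real.geom_mean_le_arith_mean2_weighted hw1p.le hw2p.le hp1 hp2 hwsum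
  have hrhs : w₁ * (x / w₁) + w₂ * ((1-x)/w₂) = 1 := by field_simp; ring
  rw [hrhs] at key
  have key2 : ((x/w₁) ^ w₁ * ((1-x)/w₂) ^ w₂) ^ (((k:ℝ)+s)) ≤ 1 := by
    have h := Real.rpow_le_rpow (by positivity) key hks.le
    simpa using h
  rw [Real.mul_rpow (by positivity) (by positivity)] at key2
  have e1 : ((x/w₁) ^ w₁ : ℝ) ^ (((k:ℝ)+s)) = (x/w₁) ^ (k:ℕ) := by
    rw [← Real.rpow_mul hp1, show w₁*((k:ℝ)+s) = (k:ℝ) by rw [hw₁]; field_simp,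
      Real.rpow_natCast]
  have e2 : (((1-x)/w₂) ^ w₂ : ℝ) ^ (((k:ℝ)+s)) = ((1-x)/w₂) ^ (s:ℕ) := by
    rw [← Real.rpow_mul hp2, show w₂*((k:ℝ)+s) = (s:ℝ) by rw [hw₂]; field_simp,
      Real.rpow_natCast]
  rw [e1, e2] at key2
  have hfin : w₁ ^ k * w₂ ^ s = (k : ℝ) ^ k * (s : ℝ) ^ s / ((k : ℝ) + s) ^ (k + s) := by
    rw [hw₁, hw₂, div_pow, div_pow, div_mul_div_comm, ← pow_add]
  calc x ^ k * (1-x) ^ s = ((x/w₁) ^ k * ((1-x)/w₂) ^ s) * (w₁ ^ k * w₂ ^ s) := by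
        clear_value w₁ w₂
        rw [div_pow, div_pow, div_mul_div_comm,
          div_mul_cancel₀ _ (mul_pos (pow_pos hw1p k) (pow_pos hw2p s)).ne']
    _ ≤ 1 * (w₁ ^ k * w₂ ^ s) := mul_le_mul_of_nonneg_right key2 (by positivity)
    _ = (k : ℝ) ^ k * (s : ℝ) ^ s / ((k : ℝ) + s) ^ (k + s) := by rw [one_mul, hfin]

theorem stmt0 (a b : ℝ) (ha : a > -1) (hb : b > -1) (k s : ℕ) (hk : 0 < k) (hs : 0 < s)
    (z : ℝ) (hz : |z| > (k : ℝ) ^ k * (s : ℝ) ^ s / ((k : ℝ) + s) ^ (k + s)) :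
    IntervalIntegrable (fun x : ℝ => x ^ a * (1 - x) ^ b / (z - x ^ k * (1 - x) ^ s))
      volume 0 1 ∧
    Summable (fun n : ℕ =>
      risingFactorial (a + 1) (k * n) * risingFactorial (b + 1) (s * n) /
        (risingFactorial (a + b + 2) ((k + s) * n) * z ^ n)) ∧
    z * Real.Gamma (a + b + 2) / (Real.Gamma (a + 1) * Real.Gamma (b + 1)) *
      ∫ x in (0:ℝ)..1, x ^ a * (1 - x) ^ b / (z - x ^ k * (1 - x) ^ s) =
    ∑' n : ℕ,
      risingFactorial (a + 1) (k * n) * risingFactorial (b + 1) (s * n) /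
        (risingFactorial (a + b + 2) ((k + s) * n) * z ^ n) := by
  set M : ℝ := (k:ℝ)^k * (s:ℝ)^s / ((k:ℝ)+s)^(k+s) with hM
  have hM0 : 0 < M := by
    have hkp : (0:ℝ) < k := by exact_mod_cast hk
    have hsp : (0:ℝ) < s := by exact_mod_cast hs
    positivity
  have hzM : M < |z| := hz
  have hzabs : 0 < |z| := lt_trans hM0 hzM
  have hz0 : z ≠ 0 := abs_pos.mp hzabs
  -- bounds on w x = x^k (1-x)^s
  have hw0 : ∀ x ∈ Set.Icc (0:ℝ) 1, 0 ≤ x^k * (1-x)^s := by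
    intro x hx
    have := hx.1; have := hx.2
    have h1 : (0:ℝ) ≤ 1 - x := by linarith [hx.2]
    positivity
  have hwM : ∀ x ∈ Set.Icc (0:ℝ) 1, x^k * (1-x)^s ≤ M :=
    fun x hx => amgm_bound k s hk hs hx.1 hx.2
  have hden : ∀ x ∈ Set.Icc (0:ℝ) 1, |z| - M ≤ |z - x^k * (1-x)^s| := by
    intro x hx
    have h1 : |z| - |x^k*(1-x)^s| ≤ |z - x^k*(1-x)^s| := abs_sub_abs_le_abs_sub _ _
    have h2 : |x^k*(1-x)^s| ≤ M := by
      rw [abs_of_nonneg (hw0 x hx)]; exact hwM x hx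
    linarith
  have hdne : ∀ x ∈ Set.Icc (0:ℝ) 1, z - x^k * (1-x)^s ≠ 0 := by
    intro x hx h
    have := hden x hx
    rw [h, abs_zero] at this
    linarith
  -- integrability of x^a (1-x)^b
  have hg0 : IntervalIntegrable (fun x : ℝ => x ^ a * (1-x) ^ b) volume 0 1 := by
    have := beta_intble (a+1) (b+1) (by linarith) (by linarith)
    simpa using this
  -- Part 1 : integrability
  have hcont : ContinuousOn (fun x : ℝ => (z - x^k * (1-x)^s)⁻¹) (Set.uIcc (0:ℝ) 1) := by
    rw [Set.uIcc_of_le (by norm_num : (0:ℝ) ≤ 1)]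
    exact ContinuousOn.inv₀ (by fun_prop) (fun x hx => hdne x hx)
  have hint : IntervalIntegrable
      (fun x : ℝ => x ^ a * (1 - x) ^ b / (z - x ^ k * (1 - x) ^ s)) volume 0 1 := by
    simp only [div_eq_mul_inv]
    exact hg0.mul_continuousOn hcont
  refine ⟨hint, ?_⟩
  have ha1 : (0:ℝ) < a + 1 := by linarith
  have hb1 : (0:ℝ) < b + 1 := by linarith
  have hab : (0:ℝ) < a + b + 2 := by linarith
  have hGa := Real.Gamma_pos_of_pos ha1
  have hGb := Real.Gamma_pos_of_pos hb1
  have hGc := Real.Gamma_pos_of_pos hab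
  set C : ℝ := Real.Gamma (a+b+2) / (Real.Gamma (a+1) * Real.Gamma (b+1)) with hC
  have hC0 : 0 < C := by positivity
  set B : ℕ → ℝ := fun n => ∫ x in Set.Ioo (0:ℝ) 1,
    x ^ (a + ((k*n : ℕ):ℝ)) * (1-x) ^ (b + ((s*n : ℕ):ℝ)) with hB
  have hexp : ∀ n : ℕ, (0:ℝ) < a + 1 + ((k*n:ℕ):ℝ) ∧ (0:ℝ) < b + 1 + ((s*n:ℕ):ℝ) := by
    intro n
    have hkn : (0:ℝ) ≤ ((k*n:ℕ):ℝ) := Nat.cast_nonneg _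
    have hsn : (0:ℝ) ≤ ((s*n:ℕ):ℝ) := Nat.cast_nonneg _
    exact ⟨by linarith, by linarith⟩
  have hBint : ∀ n : ℕ, IntegrableOn
      (fun x : ℝ => x ^ (a + ((k*n:ℕ):ℝ)) * (1-x) ^ (b + ((s*n:ℕ):ℝ)))
      (Set.Ioo 0 1) volume := by
    intro n
    have h := beta_intble (a+1+((k*n:ℕ):ℝ)) (b+1+((s*n:ℕ):ℝ)) (hexp n).1 (hexp n).2
    rw [intervalIntegrable_iff_integrableOn_Ioc_of_le (by norm_num)] at h
    have h2 := h.mono_set Set.Ioo_subset_Ioc_self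
    have e : (fun x : ℝ => x ^ (a+1+((k*n:ℕ):ℝ)-1) * (1-x) ^ (b+1+((s*n:ℕ):ℝ)-1))
        = fun x : ℝ => x ^ (a + ((k*n:ℕ):ℝ)) * (1-x) ^ (b + ((s*n:ℕ):ℝ)) := by
      funext x
      rw [show a+1+((k*n:ℕ):ℝ)-1 = a + ((k*n:ℕ):ℝ) by ring,
         show b+1+((s*n:ℕ):ℝ)-1 = b + ((s*n:ℕ):ℝ) by ring]
    rwa [e] at h2
  have hBval : ∀ n : ℕ, B n = Real.Gamma (a+1+((k*n:ℕ):ℝ)) * Real.Gamma (b+1+((s*n:ℕ):ℝ))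
      / Real.Gamma (a+b+2+(((k+s)*n:ℕ):ℝ)) := by
    intro n
    have hv := beta_val (a+1+((k*n:ℕ):ℝ)) (b+1+((s*n:ℕ):ℝ)) (hexp n).1 (hexp n).2
    rw [intervalIntegral.integral_of_le (by norm_num), integral_Ioc_eq_integral_Ioo] at hv
    have e : ∀ x : ℝ, x ^ (a+1+((k*n:ℕ):ℝ)-1) * (1-x) ^ (b+1+((s*n:ℕ):ℝ)-1)
        = x ^ (a + ((k*n:ℕ):ℝ)) * (1-x) ^ (b + ((s*n:ℕ):ℝ)) := by
      intro x
      rw [show a+1+((k*n:ℕ):ℝ)-1 = a + ((k*n:ℕ):ℝ) by ring,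
         show b+1+((s*n:ℕ):ℝ)-1 = b + ((s*n:ℕ):ℝ) by ring]
    simp only [e] at hv
    simp only [hB]
    rw [hv, show a+1+((k*n:ℕ):ℝ)+(b+1+((s*n:ℕ):ℝ)) = a+b+2+(((k+s)*n:ℕ):ℝ) by
      push_cast; ring]
  have hterm : ∀ n : ℕ,
      risingFactorial (a + 1) (k * n) * risingFactorial (b + 1) (s * n) /
        (risingFactorial (a + b + 2) ((k + s) * n) * z ^ n) = C * B n / z ^ n := by
    intro n
    have h1 := gamma_rf (a+1) ha1 (k*n)
    have h2 := gamma_rf (b+1) hb1 (s*n)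
    have h3 := gamma_rf (a+b+2) hab ((k+s)*n)
    rw [hBval n, hC, h1, h2, h3]
    have hr3 := rf_pos (a+b+2) hab ((k+s)*n)
    have hr1 := rf_pos (a+1) ha1 (k*n)
    have hzn : z ^ n ≠ 0 := pow_ne_zero _ hz0
    field_simp
  -- pointwise factorization
  have hpt : ∀ (n : ℕ), ∀ x ∈ Set.Ioo (0:ℝ) 1,
      x ^ (a + ((k*n:ℕ):ℝ)) * (1-x) ^ (b + ((s*n:ℕ):ℝ))
        = (x ^ a * (1-x) ^ b) * (x ^ k * (1-x) ^ s) ^ n := by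
    intro n x hx
    have hx0 : (0:ℝ) < x := hx.1
    have hx1 : (0:ℝ) < 1 - x := by linarith [hx.2]
    rw [Real.rpow_add hx0, Real.rpow_add hx1, Real.rpow_natCast, Real.rpow_natCast,
      pow_mul, pow_mul, mul_pow]
    ring
  have hBnn : ∀ n, 0 ≤ B n := by
    intro n
    refine setIntegral_nonneg measurableSet_Ioo fun x hx => ?_
    exact mul_nonneg (Real.rpow_nonneg hx.1.le _)
      (Real.rpow_nonneg (by linarith [hx.2]) _)
  -- I0
  set I0 : ℝ := ∫ x in Set.Ioo (0:ℝ) 1, x ^ a * (1-x) ^ b with hI0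
  have hI0int : IntegrableOn (fun x : ℝ => x ^ a * (1-x) ^ b) (Set.Ioo 0 1) volume := by
    rw [intervalIntegrable_iff_integrableOn_Ioc_of_le (by norm_num)] at hg0
    exact hg0.mono_set Set.Ioo_subset_Ioc_self
  have hI0nn : 0 ≤ I0 :=
    setIntegral_nonneg measurableSet_Ioo fun x hx =>
      mul_nonneg (Real.rpow_nonneg hx.1.le _) (Real.rpow_nonneg (by linarith [hx.2]) _)
  have hBle : ∀ n, B n ≤ I0 * M ^ n := by
    intro n
    have hmono := setIntegral_mono_on (hBint n) (hI0int.mul_const (M ^ n))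
      measurableSet_Ioo (fun x hx => ?_)
    · rw [hB]
      calc (∫ x in Set.Ioo (0:ℝ) 1, x ^ (a + ((k*n:ℕ):ℝ)) * (1-x) ^ (b + ((s*n:ℕ):ℝ)))
          ≤ ∫ x in Set.Ioo (0:ℝ) 1, (x ^ a * (1-x) ^ b) * M ^ n := hmono
        _ = I0 * M ^ n := by rw [integral_mul_const]
    · rw [hpt n x hx]
      have hxI : x ∈ Set.Icc (0:ℝ) 1 := Set.mem_Icc_of_Ioo hx
      have h1 : (x ^ k * (1-x) ^ s) ^ n ≤ M ^ n :=
        pow_le_pow_left₀ (hw0 x hxI) (hwM x hxI) n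
      have h2 : 0 ≤ x ^ a * (1-x) ^ b :=
        mul_nonneg (Real.rpow_nonneg hx.1.le _) (Real.rpow_nonneg (by linarith [hx.2]) _)
      exact mul_le_mul_of_nonneg_left h1 h2
  -- summability
  have hratio : M / |z| < 1 := (div_lt_one hzabs).2 hzM
  have hgeom : Summable (fun n : ℕ => (C * I0) * (M / |z|) ^ n) :=
    (summable_geometric_of_lt_one (by positivity) hratio).mul_left _
  have hub : ∀ n : ℕ, |risingFactorial (a + 1) (k * n) * risingFactorial (b + 1) (s * n) /
        (risingFactorial (a + b + 2) ((k + s) * n) * z ^ n)| ≤ (C * I0) * (M / |z|) ^ n := by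
    intro n
    rw [hterm n, abs_div, abs_mul, abs_pow, abs_of_nonneg hC0.le, abs_of_nonneg (hBnn n),
      div_pow]
    calc C * B n / |z| ^ n ≤ C * (I0 * M ^ n) / |z| ^ n := by
          gcongr
          exact hBle n
      _ = C * I0 * (M ^ n / |z| ^ n) := by ring
  have hsummable : Summable (fun n : ℕ =>
      risingFactorial (a + 1) (k * n) * risingFactorial (b + 1) (s * n) /
        (risingFactorial (a + b + 2) ((k + s) * n) * z ^ n)) := by
    refine Summable.of_abs (Summable.of_nonneg_of_le (fun n => abs_nonneg _) hub hgeom)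
  refine ⟨hsummable, ?_⟩
  -- series representation of the integral
  have hgint : ∀ n : ℕ, Integrable
      (fun x : ℝ => x ^ (a + ((k*n:ℕ):ℝ)) * (1-x) ^ (b + ((s*n:ℕ):ℝ)) * (z ^ (n+1))⁻¹)
      (volume.restrict (Set.Ioo (0:ℝ) 1)) := fun n => (hBint n).mul_const _
  have hnormint : ∀ n : ℕ,
      (∫ x in Set.Ioo (0:ℝ) 1,
          ‖x ^ (a + ((k*n:ℕ):ℝ)) * (1-x) ^ (b + ((s*n:ℕ):ℝ)) * (z ^ (n+1))⁻¹‖)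
        = B n * (|z| ^ (n+1))⁻¹ := by
    intro n
    have heq := setIntegral_congr_fun (μ := volume) (s := Set.Ioo (0:ℝ) 1)
      (f := fun x : ℝ => ‖x ^ (a + ((k*n:ℕ):ℝ)) * (1-x) ^ (b + ((s*n:ℕ):ℝ)) * (z ^ (n+1))⁻¹‖)
      (g := fun x : ℝ => x ^ (a + ((k*n:ℕ):ℝ)) * (1-x) ^ (b + ((s*n:ℕ):ℝ)) * (|z| ^ (n+1))⁻¹)
      measurableSet_Ioo (fun x hx => by
        simp only [Real.norm_eq_abs, abs_mul, abs_inv, abs_pow]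
        rw [abs_of_nonneg (Real.rpow_nonneg hx.1.le _),
          abs_of_nonneg (Real.rpow_nonneg (by linarith [hx.2]) _)])
    rw [heq, integral_mul_const]
  have hsumnorm : Summable (fun n : ℕ =>
      ∫ x in Set.Ioo (0:ℝ) 1,
        ‖x ^ (a + ((k*n:ℕ):ℝ)) * (1-x) ^ (b + ((s*n:ℕ):ℝ)) * (z ^ (n+1))⁻¹‖) := by
    have hg2 : Summable (fun n : ℕ => (I0 / |z|) * (M / |z|) ^ n) :=
      (summable_geometric_of_lt_one (by positivity) hratio).mul_left _
    refine Summable.of_nonneg_of_le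
      (fun n => integral_nonneg fun x => norm_nonneg _) (fun n => ?_) hg2
    rw [hnormint n]
    calc B n * (|z| ^ (n+1))⁻¹ ≤ (I0 * M ^ n) * (|z| ^ (n+1))⁻¹ := by
          gcongr; exact hBle n
      _ = (I0 / |z|) * (M / |z|) ^ n := by
          rw [div_pow, pow_succ, mul_inv]
          ring
  have hexch := MeasureTheory.integral_tsum_of_summable_integral_norm hgint hsumnorm
  -- pointwise series for the integrand
  have hptsum : ∀ x ∈ Set.Ioo (0:ℝ) 1,
      (∑' n : ℕ, x ^ (a + ((k*n:ℕ):ℝ)) * (1-x) ^ (b + ((s*n:ℕ):ℝ)) * (z ^ (n+1))⁻¹)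
        = x ^ a * (1 - x) ^ b / (z - x ^ k * (1 - x) ^ s) := by
    intro x hx
    have hxI : x ∈ Set.Icc (0:ℝ) 1 := Set.mem_Icc_of_Ioo hx
    have hwa : |x^k*(1-x)^s / z| < 1 := by
      rw [abs_div, abs_of_nonneg (hw0 x hxI)]
      exact (div_lt_one hzabs).2 (lt_of_le_of_lt (hwM x hxI) hzM)
    have hgeo : (∑' n : ℕ, (x^k*(1-x)^s / z) ^ n) = (1 - x^k*(1-x)^s / z)⁻¹ :=
      tsum_geometric_of_norm_lt_one (by rwa [Real.norm_eq_abs])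
    calc (∑' n : ℕ, x ^ (a + ((k*n:ℕ):ℝ)) * (1-x) ^ (b + ((s*n:ℕ):ℝ)) * (z ^ (n+1))⁻¹)
        = ∑' n : ℕ, (x ^ a * (1-x) ^ b / z) * (x^k*(1-x)^s / z) ^ n := by
          refine tsum_congr fun n => ?_
          rw [hpt n x hx, div_pow, pow_succ, mul_inv]
          ring
      _ = (x ^ a * (1-x) ^ b / z) * (1 - x^k*(1-x)^s / z)⁻¹ := by rw [tsum_mul_left, hgeo]
      _ = x ^ a * (1 - x) ^ b / (z - x ^ k * (1 - x) ^ s) := by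
          rw [show (1 - x^k*(1-x)^s/z) = (z - x^k*(1-x)^s)/z by field_simp, inv_div]
          rw [div_mul_div_comm]
          rw [mul_comm z (z - x^k*(1-x)^s), mul_div_mul_right _ _ hz0]
  rw [intervalIntegral.integral_of_le (by norm_num : (0:ℝ) ≤ 1), integral_Ioc_eq_integral_Ioo]
  have hIoo : (∫ x in Set.Ioo (0:ℝ) 1, x ^ a * (1 - x) ^ b / (z - x ^ k * (1 - x) ^ s))
      = ∑' n : ℕ, B n * (z ^ (n+1))⁻¹ := by
    calc (∫ x in Set.Ioo (0:ℝ) 1, x ^ a * (1 - x) ^ b / (z - x ^ k * (1 - x) ^ s))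
        = ∫ x in Set.Ioo (0:ℝ) 1, ∑' n : ℕ,
            x ^ (a + ((k*n:ℕ):ℝ)) * (1-x) ^ (b + ((s*n:ℕ):ℝ)) * (z ^ (n+1))⁻¹ :=
          (setIntegral_congr_fun measurableSet_Ioo hptsum).symm
      _ = ∑' n : ℕ, ∫ x in Set.Ioo (0:ℝ) 1,
            x ^ (a + ((k*n:ℕ):ℝ)) * (1-x) ^ (b + ((s*n:ℕ):ℝ)) * (z ^ (n+1))⁻¹ := hexch.symm
      _ = ∑' n : ℕ, B n * (z ^ (n+1))⁻¹ := tsum_congr fun n => by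
            rw [integral_mul_const]
  rw [hIoo]
  have hzC : z * Real.Gamma (a+b+2) / (Real.Gamma (a+1) * Real.Gamma (b+1)) = z * C := by
    rw [hC]; ring
  rw [hzC, ← tsum_mul_left]
  refine tsum_congr fun n => ?_
  rw [hterm n, pow_succ]
  field_simp
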